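/- Let σ ⊂ ℝ^n be a Gorenstein cone with support Δ̃ = σ_(1). Suppose there exist nonzero lattice points e*_1, …, e*_r ∈ σ^∨ ∩ ℤ^n with e*_1 + ⋯ + e*_r = n_σ. Then e*_1, …, e*_r form part of a ℤ-basis of ℤ^n; for each i the polytope Δ̃_i := {x ∈ Δ̃ : ⟨x, e*_j⟩ = 0 for all j ≠ i} is nonempty and satisfies ⟨x, e*_i⟩ = 1 for all x ∈ Δ̃_i; the polytope Δ̃ equals the convex hull of Δ̃_1 ∪ ⋯ ∪ Δ̃_r; and the linear map x ↦ (⟨x, e*_1⟩, …, ⟨x, e*_r⟩) maps Δ̃ surjectively onto the unimodular simplex Conv(e_1, …, e_r) ⊂ ℝ^r. -/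

import Mathlib

open Pointwise

noncomputable section

/-- A point of `ℝ^n` all of whose coordinates are integers (a lattice point of `ℤ^n`). -/
def IsLatticePt {n : ℕ} (x : Fin n → ℝ) : Prop := ∀ k, ∃ m : ℤ, x k = (m : ℝ)

/-- A lattice polytope: the convex hull of finitely many lattice points. -/
def IsLatticePoly {n : ℕ} (P : Set (Fin n → ℝ)) : Prop :=
  ∃ V : Finset (Fin n → ℝ), V.Nonempty ∧ (∀ v ∈ V, IsLatticePt v) ∧
    P = convexHull ℝ (V : Set (Fin n → ℝ))

/-- The standard inner product pairing on `ℝ^n`. -/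
def pairR {n : ℕ} (x y : Fin n → ℝ) : ℝ := ∑ k, x k * y k

/-- The dual polytope `P* = {y : ⟨x,y⟩ ≥ -1 ∀ x ∈ P}`. -/
def dualPoly {n : ℕ} (P : Set (Fin n → ℝ)) : Set (Fin n → ℝ) :=
  {y | ∀ x ∈ P, -1 ≤ pairR x y}

/-- A reflexive polytope: a lattice polytope with `0` in its interior whose dual
polytope is again a lattice polytope. -/
def IsReflexivePoly {n : ℕ} (P : Set (Fin n → ℝ)) : Prop :=
  IsLatticePoly P ∧ (0 : Fin n → ℝ) ∈ interior P ∧ IsLatticePoly (dualPoly P)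

/-- The dimension of a polytope: the dimension of the direction of its affine span. -/
def polyDim {n : ℕ} (P : Set (Fin n → ℝ)) : ℕ :=
  Module.finrank ℝ (affineSpan ℝ P).direction

/-- A (full-dimensional) Gorenstein polytope of index `r`: `rP` has `m` as its unique
interior lattice point and `rP - m` is reflexive. -/
def IsGorensteinPoly {n : ℕ} (P : Set (Fin n → ℝ)) (r : ℕ) (m : Fin n → ℝ) : Prop :=
  IsLatticePoly P ∧ IsLatticePt m ∧
  (∀ x, IsLatticePt x → (x ∈ interior ((r : ℝ) • P) ↔ x = m)) ∧
  IsReflexivePoly ((fun x => x - m) '' ((r : ℝ) • P))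

/-- `y` is a point of the lattice dual to the (saturated) lattice `ℤ^n ∩ W` inside `W`. -/
def IsDualLatticePt {n : ℕ} (W : Submodule ℝ (Fin n → ℝ)) (y : Fin n → ℝ) : Prop :=
  y ∈ W ∧ ∀ x ∈ W, IsLatticePt x → ∃ m : ℤ, pairR x y = (m : ℝ)

/-- Reflexivity of a (possibly lower-dimensional) lattice polytope inside its linear
span: `0` is in the relative interior and the dual polytope taken inside the linear
span is a lattice polytope with respect to the dual lattice. -/
def IsReflexiveIn {n : ℕ} (P : Set (Fin n → ℝ)) : Prop :=
  IsLatticePoly P ∧ (0 : Fin n → ℝ) ∈ intrinsicInterior ℝ P ∧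
  ∃ V : Finset (Fin n → ℝ), V.Nonempty ∧
    (∀ v ∈ V, IsDualLatticePt (Submodule.span ℝ P) v) ∧
    {y | y ∈ Submodule.span ℝ P ∧ ∀ x ∈ P, -1 ≤ pairR x y} =
      convexHull ℝ (V : Set (Fin n → ℝ))

/-- Gorenstein polytope of index `r` (possibly lower-dimensional): `rP` has `m` as its
unique relative-interior lattice point and `rP - m` is reflexive within its span. -/
def IsGorensteinIn {n : ℕ} (P : Set (Fin n → ℝ)) (r : ℕ) (m : Fin n → ℝ) : Prop :=
  IsLatticePoly P ∧ IsLatticePt m ∧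
  (∀ x, IsLatticePt x → (x ∈ intrinsicInterior ℝ ((r : ℝ) • P) ↔ x = m)) ∧
  IsReflexiveIn ((fun x => x - m) '' ((r : ℝ) • P))

/-- The Minkowski sum `Δ 0 + ⋯ + Δ (r-1)` of a family of sets. -/
def minkSum {n r : ℕ} (Δ : Fin r → Set (Fin n → ℝ)) : Set (Fin n → ℝ) :=
  {x | ∃ f : Fin r → (Fin n → ℝ), (∀ i, f i ∈ Δ i) ∧ x = ∑ i, f i}

/-- The Minkowski sum `Σ_{i ∈ I} Δ i`. -/
def minkSumOver {n r : ℕ} (I : Finset (Fin r)) (Δ : Fin r → Set (Fin n → ℝ)) :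
    Set (Fin n → ℝ) :=
  {x | ∃ f : Fin r → (Fin n → ℝ), (∀ i ∈ I, f i ∈ Δ i) ∧ x = ∑ i ∈ I, f i}

/-- The point `x × e_i ∈ ℝ^d × ℝ^r`. -/
def cayleyPt {d r : ℕ} (x : Fin d → ℝ) (i : Fin r) : Fin (d + r) → ℝ :=
  Fin.append x (fun j => if j = i then 1 else 0)

/-- The Cayley polytope `Δ 0 * ⋯ * Δ (r-1) ⊂ ℝ^d × ℝ^r`. -/
def cayley {d r : ℕ} (Δ : Fin r → Set (Fin d → ℝ)) : Set (Fin (d + r) → ℝ) :=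
  convexHull ℝ (⋃ i, (fun x => cayleyPt x i) '' Δ i)

/-- `F` is a facet of `P`: a nonempty exposed face of dimension one less. -/
def IsFacetOf {n : ℕ} (F P : Set (Fin n → ℝ)) : Prop :=
  IsExposed ℝ P F ∧ F.Nonempty ∧ polyDim F + 1 = polyDim P

/-- A special `(r-1)`-simplex of `P`: `r` affinely independent lattice points of `P`
such that every facet of `P` contains exactly `r - 1` of them. -/
def IsSpecialSimplex {n : ℕ} (P : Set (Fin n → ℝ)) (r : ℕ) (v : Fin r → Fin n → ℝ) : Prop :=
  (∀ i, IsLatticePt (v i) ∧ v i ∈ P) ∧ AffineIndependent ℝ v ∧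
  ∀ F, IsFacetOf F P → ∃! i, v i ∉ F

/-- `∇_i = {y : ⟨x,y⟩ ≥ -δ_{ij} ∀ x ∈ Δ_j ∀ j}`, the polytopes of the dual nef-partition. -/
def nefDual {d r : ℕ} (Δ : Fin r → Set (Fin d → ℝ)) (i : Fin r) : Set (Fin d → ℝ) :=
  {y | ∀ j, ∀ x ∈ Δ j, -(if i = j then (1 : ℝ) else 0) ≤ pairR x y}

/-- A centered nef-partition: lattice polytopes containing `0` whose Minkowski sum is a
reflexive polytope with `0` as its unique interior lattice point. -/
def IsCenteredNefPartition {d r : ℕ} (Δ : Fin r → Set (Fin d → ℝ)) : Prop :=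
  (∀ i, IsLatticePoly (Δ i) ∧ (0 : Fin d → ℝ) ∈ Δ i) ∧
  IsReflexivePoly (minkSum Δ) ∧
  ∀ x, IsLatticePt x → x ∈ interior (minkSum Δ) → x = 0

/-- Two centered nef-partitions dual to each other. -/
def AreDualNefPartitions {d r : ℕ} (Δ Nb : Fin r → Set (Fin d → ℝ)) : Prop :=
  IsCenteredNefPartition Δ ∧ IsCenteredNefPartition Nb ∧
  (∀ i, Nb i = nefDual Δ i) ∧ (∀ i, Δ i = nefDual Nb i)

/-- A Gorenstein cone with its distinguished lattice point `nσ`: a full-dimensional cone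
generated by finitely many lattice points on the hyperplane `⟨·, nσ⟩ = 1`. -/
def IsGorensteinCone {n : ℕ} (σ : Set (Fin n → ℝ)) (nσ : Fin n → ℝ) : Prop :=
  IsLatticePt nσ ∧ Submodule.span ℝ σ = ⊤ ∧
  ∃ V : Finset (Fin n → ℝ), V.Nonempty ∧
    (∀ v ∈ V, IsLatticePt v ∧ pairR v nσ = 1) ∧
    σ = {x | ∃ c : (Fin n → ℝ) → ℝ, (∀ v, 0 ≤ c v) ∧ x = ∑ v ∈ V, c v • v}

/-- The dual cone. -/
def dualCone {n : ℕ} (σ : Set (Fin n → ℝ)) : Set (Fin n → ℝ) :=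
  {y | ∀ x ∈ σ, 0 ≤ pairR x y}

/-- Integrally closed lattice polytope: every lattice point of `k • P` is a sum of `k`
lattice points of `P`. -/
def IntegrallyClosed {n : ℕ} (P : Set (Fin n → ℝ)) : Prop :=
  ∀ (k : ℕ) (x : Fin n → ℝ), IsLatticePt x → x ∈ (k : ℝ) • P →
    ∃ v : Fin k → (Fin n → ℝ), (∀ j, IsLatticePt (v j) ∧ v j ∈ P) ∧ x = ∑ j, v j


lemma pairR_comm {n : ℕ} (x y : Fin n → ℝ) : pairR x y = pairR y x := by
  unfold pairR; exact Finset.sum_congr rfl fun k _ => mul_comm _ _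

lemma pairR_add_left {n : ℕ} (x y z : Fin n → ℝ) : pairR (x + y) z = pairR x z + pairR y z := by
  unfold pairR; rw [← Finset.sum_add_distrib]
  exact Finset.sum_congr rfl fun k _ => by simp [add_mul]

lemma pairR_smul_left {n : ℕ} (c : ℝ) (x z : Fin n → ℝ) : pairR (c • x) z = c * pairR x z := by
  unfold pairR; rw [Finset.mul_sum]
  exact Finset.sum_congr rfl fun k _ => by simp [mul_assoc]

lemma pairR_sum_left {n : ℕ} {α : Type*} (s : Finset α) (f : α → Fin n → ℝ) (z : Fin n → ℝ) :
    pairR (∑ a ∈ s, f a) z = ∑ a ∈ s, pairR (f a) z := by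
  unfold pairR
  rw [Finset.sum_comm]
  exact Finset.sum_congr rfl fun k _ => by simp [Finset.sum_apply, Finset.sum_mul]

lemma pairR_sum_right {n : ℕ} {α : Type*} (s : Finset α) (f : α → Fin n → ℝ) (z : Fin n → ℝ) :
    pairR z (∑ a ∈ s, f a) = ∑ a ∈ s, pairR z (f a) := by
  rw [pairR_comm, pairR_sum_left]; exact Finset.sum_congr rfl fun a _ => pairR_comm _ _

def pairL {n : ℕ} (z : Fin n → ℝ) : (Fin n → ℝ) →ₗ[ℝ] ℝ where
  toFun x := pairR x z
  map_add' x y := pairR_add_left x y z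
  map_smul' c x := pairR_smul_left c x z

lemma lattice_pair_int {n : ℕ} {x y : Fin n → ℝ} (hx : IsLatticePt x) (hy : IsLatticePt y) :
    ∃ m : ℤ, pairR x y = (m : ℝ) := by
  choose a ha using hx
  choose b hb using hy
  refine ⟨∑ k, a k * b k, ?_⟩
  unfold pairR
  push_cast
  exact Finset.sum_congr rfl fun k _ => by rw [ha k, hb k]

lemma pairR_self_eq_zero {n : ℕ} {x : Fin n → ℝ} (h : pairR x x = 0) : x = 0 := by
  funext k
  have h2 : ∀ j ∈ Finset.univ (α := Fin n), 0 ≤ x j * x j := fun j _ => mul_self_nonneg _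
  have := (Finset.sum_eq_zero_iff_of_nonneg h2).1 h k (Finset.mem_univ k)
  simpa [mul_self_eq_zero] using this


/-- the integer-coefficient cast map as a `ℤ`-linear map -/
noncomputable def castL (n : ℕ) : (Fin n → ℤ) →ₗ[ℤ] (Fin n → ℝ) where
  toFun z := fun k => (z k : ℝ)
  map_add' x y := by funext k; push_cast; simp
  map_smul' c x := by
    funext k
    show ((c • x) k : ℝ) = (c • fun k => ((x k : ℝ))) k
    simp [zsmul_eq_mul]

/-- pairing an integer vector with a fixed integer vector, as a `ℤ`-linear map -/
noncomputable def pairZL {n : ℕ} (w : Fin n → ℤ) : (Fin n → ℤ) →ₗ[ℤ] ℤ where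
  toFun x := ∑ k, w k * x k
  map_add' x y := by
    rw [← Finset.sum_add_distrib]
    exact Finset.sum_congr rfl fun k _ => by show w k * (x k + y k) = _; ring
  map_smul' c x := by
    show ∑ k, w k * (c * x k) = c * ∑ k, w k * x k
    rw [Finset.mul_sum]
    exact Finset.sum_congr rfl fun k _ => by ring

theorem exists_lattice_basis {n r : ℕ} (e v : Fin r → Fin n → ℝ)
    (hlat : ∀ i, IsLatticePt (e i)) (hvlat : ∀ i, IsLatticePt (v i))
    (hδ : ∀ i j, pairR (v i) (e j) = if i = j then 1 else 0) :
    ∃ b : Fin n → Fin n → ℝ,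
      LinearIndependent ℝ b ∧ (∀ k, IsLatticePt (b k)) ∧
      (∀ x, IsLatticePt x → ∃ c : Fin n → ℤ, x = ∑ k, (c k : ℝ) • b k) ∧
      ∃ f : Fin r → Fin n, Function.Injective f ∧ ∀ i, b (f i) = e i := by
  classical
  choose E hE using fun i => hlat i
  choose W hW using fun i => hvlat i
  have hEe : ∀ i, castL n (E i) = e i := fun i => funext fun k => (hE i k).symm
  set ψ : Fin r → ((Fin n → ℤ) →ₗ[ℤ] ℤ) := fun j => pairZL (W j) with hψ
  have hψE : ∀ j i, ψ j (E i) = if j = i then 1 else 0 := by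
    intro j i
    have hreal : ((∑ k, W j k * E i k : ℤ) : ℝ) = pairR (v j) (e i) := by
      push_cast
      exact (Finset.sum_congr rfl fun k _ => by rw [hW j k, hE i k]).symm
    rw [hδ j i] at hreal
    show (∑ k, W j k * E i k) = _
    rcases eq_or_ne j i with rfl | hji
    · rw [if_pos rfl] at hreal ⊢; exact_mod_cast hreal
    · rw [if_neg hji] at hreal ⊢; exact_mod_cast hreal
  -- ℤ-linear independence of E
  have hEind : LinearIndependent ℤ E := by
    rw [Fintype.linearIndependent_iff]
    intro g hg j
    have h1 := congrArg (ψ j) hg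
    rw [map_sum, map_zero] at h1
    simp only [map_smul, hψE, smul_eq_mul, mul_ite, mul_one, mul_zero,
      Finset.sum_ite_eq, Finset.mem_univ, if_true] at h1
    exact h1
  -- the complement
  set K : Submodule ℤ (Fin n → ℤ) := ⨅ j, LinearMap.ker (ψ j) with hK
  have hdecomp : ∀ x : Fin n → ℤ, x - ∑ j, ψ j x • E j ∈ K := by
    intro x
    rw [hK, Submodule.mem_iInf]
    intro j
    rw [LinearMap.mem_ker, map_sub, map_sum]
    simp only [map_smul, hψE, smul_eq_mul, mul_ite, mul_one, mul_zero,
      Finset.sum_ite_eq, Finset.mem_univ, if_true]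
    exact sub_self _
  obtain ⟨m, bK⟩ := Submodule.basisOfPid (Pi.basisFun ℤ (Fin n)) K
  set bK' : Fin m → (Fin n → ℤ) := fun j => (bK j : Fin n → ℤ) with hbK'
  have hbK'ind : LinearIndependent ℤ bK' :=
    bK.linearIndependent.map' K.subtype K.ker_subtype
  have hKspan : Submodule.span ℤ (Set.range bK') = K := by
    have h1 : bK' = K.subtype ∘ bK := rfl
    rw [h1, Set.range_comp, Submodule.span_image, bK.span_eq, Submodule.map_subtype_top]
  have hdisj : Disjoint (Submodule.span ℤ (Set.range E)) K := by
    rw [Submodule.disjoint_def]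
    intro x hxE hxK
    rw [Submodule.mem_span_range_iff_exists_fun] at hxE
    obtain ⟨g, hg⟩ := hxE
    have hg0 : ∀ j, g j = 0 := by
      intro j
      have h1 := congrArg (ψ j) hg
      have h2 : ψ j x = 0 := LinearMap.mem_ker.1 ((Submodule.mem_iInf _).1 hxK j)
      rw [map_sum, h2] at h1
      simp only [map_smul, hψE, smul_eq_mul, mul_ite, mul_one, mul_zero,
        Finset.sum_ite_eq, Finset.mem_univ, if_true] at h1
      exact h1
    rw [← hg]
    exact Finset.sum_eq_zero fun j _ => by rw [hg0 j, zero_smul]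
  set c : Fin r ⊕ Fin m → (Fin n → ℤ) := Sum.elim E bK' with hc
  have hind : LinearIndependent ℤ c :=
    hEind.sum_type hbK'ind (by rw [hKspan]; exact hdisj)
  have hspanTop : ⊤ ≤ Submodule.span ℤ (Set.range c) := by
    intro x _
    have h1 : (∑ j, ψ j x • E j) ∈ Submodule.span ℤ (Set.range c) :=
      Submodule.sum_mem _ fun j _ =>
        Submodule.smul_mem _ _ (Submodule.subset_span ⟨Sum.inl j, rfl⟩)
    have h2 : x - ∑ j, ψ j x • E j ∈ Submodule.span ℤ (Set.range c) := by
      have h3 : K ≤ Submodule.span ℤ (Set.range c) := by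
        rw [← hKspan]
        exact Submodule.span_mono (by rintro _ ⟨j, rfl⟩; exact ⟨Sum.inr j, rfl⟩)
      exact h3 (hdecomp x)
    simpa using Submodule.add_mem _ h2 h1
  set B : Module.Basis (Fin r ⊕ Fin m) ℤ (Fin n → ℤ) := Module.Basis.mk hind hspanTop with hB
  have hcard : r + m = n := by
    have h1 := Module.finrank_eq_card_basis B
    rw [Module.finrank_pi] at h1
    simpa [Fintype.card_sum] using h1.symm
  have hcard' : Fintype.card (Fin r ⊕ Fin m) = n := by simp [Fintype.card_sum, hcard]
  set g : (Fin r ⊕ Fin m) ≃ Fin n := Fintype.equivFinOfCardEq hcard' with hg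
  set B' : Module.Basis (Fin n) ℤ (Fin n → ℤ) := B.reindex g with hB'
  have hrep : ∀ x : Fin n → ℝ, IsLatticePt x →
      ∃ c : Fin n → ℤ, x = ∑ k, (c k : ℝ) • (fun j => ((B' k) j : ℝ)) := by
    intro x hx
    choose X hX using hx
    refine ⟨fun k => B'.repr X k, ?_⟩
    have hXsum : ∑ k, B'.repr X k • B' k = X := B'.sum_repr X
    calc x = castL n X := funext fun k => hX k
      _ = castL n (∑ k, B'.repr X k • B' k) := by rw [hXsum]
      _ = ∑ k, ((B'.repr X k : ℤ) : ℝ) • (fun j => ((B' k) j : ℝ)) := by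
          simp only [map_sum, map_smul]
          exact Finset.sum_congr rfl fun k _ => (Int.cast_smul_eq_zsmul ℝ _ _).symm
  refine ⟨fun k j => ((B' k) j : ℝ), ?_, ?_, hrep, fun i => g (Sum.inl i), ?_, ?_⟩
  · -- linear independence over ℝ
    apply linearIndependent_of_top_le_span_of_card_eq_finrank
    · intro x _
      have hmem : ∀ y : Fin n → ℝ, IsLatticePt y →
          y ∈ Submodule.span ℝ (Set.range fun k => fun j => ((B' k) j : ℝ)) := by
        intro y hy
        obtain ⟨c, hc⟩ := hrep y hy
        rw [hc]
        exact Submodule.sum_mem _ fun k _ =>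
          Submodule.smul_mem _ _ (Submodule.subset_span ⟨k, rfl⟩)
      have hsum : (∑ i, x i • fun j => if i = j then (1:ℝ) else 0) ∈
          Submodule.span ℝ (Set.range fun k => fun j => ((B' k) j : ℝ)) :=
        Submodule.sum_mem _ fun i _ => Submodule.smul_mem _ _
          (hmem _ (fun j => ⟨if i = j then 1 else 0, by split <;> simp⟩))
      rwa [← pi_eq_sum_univ x] at hsum
    · rw [Module.finrank_pi]
  · intro k j
    exact ⟨B' k j, rfl⟩
  · exact fun a b h => Sum.inl_injective (g.injective h)
  · intro i
    have h1 : B' (g (Sum.inl i)) = E i := by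
      rw [hB', Module.Basis.reindex_apply, Equiv.symm_apply_apply, hB, Module.Basis.mk_apply]
      rfl
    show (fun j => ((B' (g (Sum.inl i))) j : ℝ)) = e i
    rw [h1]
    exact hEe i

/-- If a Gorenstein cone `σ` admits nonzero lattice points
`e*_1, …, e*_r ∈ σ^∨` with `e*_1 + ⋯ + e*_r = n_σ`, then they form part of a `ℤ`-basis
of `ℤ^n`, the polytopes `Δ̃_i` are nonempty with `⟨·, e*_i⟩ = 1` on them, the support
`Δ̃` is the convex hull of their union, and `x ↦ (⟨x,e*_1⟩, …, ⟨x,e*_r⟩)` maps `Δ̃`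
onto the unimodular simplex. -/
theorem gorenstein_cone_cayley_structure {n r : ℕ} (hr : 0 < r)
    (σ : Set (Fin n → ℝ)) (nσ : Fin n → ℝ)
    (hσ : IsGorensteinCone σ nσ)
    (e : Fin r → Fin n → ℝ)
    (hne : ∀ i, e i ≠ 0)
    (hlat : ∀ i, IsLatticePt (e i))
    (hdual : ∀ i, e i ∈ dualCone σ)
    (hsum : ∑ i, e i = nσ) :
    (∃ b : Fin n → Fin n → ℝ,
        LinearIndependent ℝ b ∧ (∀ k, IsLatticePt (b k)) ∧
        (∀ x, IsLatticePt x → ∃ c : Fin n → ℤ, x = ∑ k, (c k : ℝ) • b k) ∧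
        ∃ f : Fin r → Fin n, Function.Injective f ∧ ∀ i, b (f i) = e i) ∧
    (∀ i : Fin r,
        ({x ∈ σ ∩ {x | pairR x nσ = 1} | ∀ j, j ≠ i → pairR x (e j) = 0}).Nonempty ∧
        ∀ x ∈ {x ∈ σ ∩ {x | pairR x nσ = 1} | ∀ j, j ≠ i → pairR x (e j) = 0},
          pairR x (e i) = 1) ∧
    (σ ∩ {x | pairR x nσ = 1} =
      convexHull ℝ
        (⋃ i, {x ∈ σ ∩ {x | pairR x nσ = 1} | ∀ j, j ≠ i → pairR x (e j) = 0})) ∧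
    ((fun x => fun i => pairR x (e i)) '' (σ ∩ {x | pairR x nσ = 1}) =
      convexHull ℝ (Set.range fun i : Fin r => (Pi.single i 1 : Fin r → ℝ))) := by
  obtain ⟨hnσ, hspan, V, hVne, hVp, hσeq⟩ := hσ
  -- each vertex is in the cone
  have hVσ : ∀ v ∈ V, v ∈ σ := by
    intro v hv
    rw [hσeq]
    refine ⟨fun w => if w = v then 1 else 0, fun w => by positivity, ?_⟩
    rw [Finset.sum_eq_single_of_mem v hv]
    · simp
    · intro w _ hw; simp [hw]
  -- sum over i of pairings equals pairing with nσ
  have hsum1 : ∀ x : Fin n → ℝ, (∑ j, pairR x (e j)) = pairR x nσ := by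
    intro x; rw [← hsum, pairR_sum_right]
  -- partition of vertices
  have hpart : ∀ v ∈ V, ∃ i, pairR v (e i) = 1 ∧ ∀ j, j ≠ i → pairR v (e j) = 0 := by
    intro v hv
    have hvint : ∀ j, ∃ m : ℤ, pairR v (e j) = (m : ℝ) :=
      fun j => lattice_pair_int (hVp v hv).1 (hlat j)
    choose m hm using hvint
    have hm0 : ∀ j, 0 ≤ m j := by
      intro j
      have := hdual j v (hVσ v hv)
      rw [hm j] at this; exact_mod_cast this
    have hms : (∑ j, m j) = 1 := by
      have : ((∑ j, m j : ℤ) : ℝ) = 1 := by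
        push_cast
        rw [Finset.sum_congr rfl fun j _ => (hm j).symm, hsum1, (hVp v hv).2]
      exact_mod_cast this
    have hex : ∃ i, 0 < m i := by
      by_contra h
      push_neg at h
      have : (∑ j, m j) ≤ 0 := Finset.sum_nonpos fun j _ => h j
      omega
    obtain ⟨i, hi⟩ := hex
    have hrest : ∑ j ∈ Finset.univ.erase i, m j = 1 - m i := by
      have := Finset.add_sum_erase Finset.univ m (Finset.mem_univ i)
      omega
    have hmi : m i = 1 := by
      have h1 : 0 ≤ ∑ j ∈ Finset.univ.erase i, m j :=
        Finset.sum_nonneg fun j _ => hm0 j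
      omega
    have hz : ∀ j ∈ Finset.univ.erase i, m j = 0 := by
      have h1 : ∑ j ∈ Finset.univ.erase i, m j = 0 := by omega
      exact (Finset.sum_eq_zero_iff_of_nonneg fun j _ => hm0 j).1 h1
    refine ⟨i, by rw [hm i, hmi]; norm_num, fun j hj => ?_⟩
    rw [hm j, hz j (Finset.mem_erase.2 ⟨hj, Finset.mem_univ j⟩)]
    norm_num
  -- each part is nonempty
  have hVi : ∀ i, ∃ v ∈ V, pairR v (e i) = 1 ∧ ∀ j, j ≠ i → pairR v (e j) = 0 := by
    intro i
    by_contra h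
    push_neg at h
    have hz : ∀ v ∈ V, pairR v (e i) = 0 := by
      intro v hv
      obtain ⟨i', h1, h2⟩ := hpart v hv
      rcases eq_or_ne i' i with rfl | hne'
      · obtain ⟨j, hj, hj0⟩ := h v hv h1
        exact absurd (h2 j hj) hj0
      · exact h2 i (Ne.symm hne')
    have hσz : σ ⊆ (LinearMap.ker (pairL (e i)) : Submodule ℝ (Fin n → ℝ)) := by
      intro x hx
      rw [hσeq] at hx
      obtain ⟨c, hc0, rfl⟩ := hx
      simp only [SetLike.mem_coe, LinearMap.mem_ker]
      show pairR _ (e i) = 0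
      rw [pairR_sum_left]
      exact Finset.sum_eq_zero fun v hv => by rw [pairR_smul_left, hz v hv, mul_zero]
    have htop : (⊤ : Submodule ℝ (Fin n → ℝ)) ≤ LinearMap.ker (pairL (e i)) := by
      rw [← hspan]
      exact Submodule.span_le.2 hσz
    have hei : pairR (e i) (e i) = 0 := LinearMap.mem_ker.1 (htop Submodule.mem_top)
    exact hne i (pairR_self_eq_zero hei)
  -- the slice is the convex hull of V
  have hΔ : σ ∩ {x | pairR x nσ = 1} = convexHull ℝ (V : Set (Fin n → ℝ)) := by
    ext x
    constructor
    · rintro ⟨hxσ, hx1⟩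
      rw [hσeq] at hxσ
      obtain ⟨c, hc0, rfl⟩ := hxσ
      rw [Finset.mem_convexHull']
      refine ⟨c, fun y _ => hc0 y, ?_, rfl⟩
      have : pairR (∑ v ∈ V, c v • v) nσ = ∑ v ∈ V, c v := by
        rw [pairR_sum_left]
        exact Finset.sum_congr rfl fun v hv => by
          rw [pairR_smul_left, (hVp v hv).2, mul_one]
      rw [← this]; exact hx1
    · intro hx
      rw [Finset.mem_convexHull'] at hx
      obtain ⟨w, hw0, hw1, hwx⟩ := hx
      constructor
      · rw [hσeq]
        refine ⟨fun v => if v ∈ V then w v else 0, ?_, ?_⟩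
        · intro v; dsimp only; split
          · exact hw0 v ‹_›
          · exact le_refl _
        · rw [← hwx]
          exact (Finset.sum_congr rfl fun v hv => by dsimp only; rw [if_pos hv]).symm
      · show pairR x nσ = 1
        rw [← hwx, pairR_sum_left, ← hw1]
        exact Finset.sum_congr rfl fun v hv => by
          rw [pairR_smul_left, (hVp v hv).2, mul_one]
  refine ⟨?_, ?_, ?_, ?_⟩
  · choose vtx hvtxV hvtx1 hvtx0 using hVi
    have hδ : ∀ i j, pairR (vtx i) (e j) = if i = j then 1 else 0 := by
      intro i j
      rcases eq_or_ne i j with rfl | hij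
      · rw [if_pos rfl]; exact hvtx1 i
      · rw [if_neg hij]; exact hvtx0 i j (Ne.symm hij)
    exact exists_lattice_basis e vtx hlat (fun i => (hVp (vtx i) (hvtxV i)).1) hδ
  · -- part 2
    intro i
    obtain ⟨v, hv, hv1, hv0⟩ := hVi i
    constructor
    · exact ⟨v, Set.mem_sep (Set.mem_inter (hVσ v hv) ((hVp v hv).2)) hv0⟩
    · rintro x ⟨⟨hxσ, hx1⟩, hx0⟩
      have := hsum1 x
      rw [hx1] at this
      rw [← this, Finset.sum_eq_single_of_mem i (Finset.mem_univ i)]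
      intro j _ hj
      exact hx0 j hj
  · -- part 3
    apply subset_antisymm
    · rw [hΔ]
      apply convexHull_min ?_ (convex_convexHull ℝ _)
      intro v hv
      obtain ⟨i, h1, h2⟩ := hpart v hv
      exact subset_convexHull ℝ _ (Set.mem_iUnion.2
        ⟨i, Set.mem_sep (subset_convexHull ℝ (V : Set (Fin n → ℝ)) hv) h2⟩)
    · apply convexHull_min
      · exact Set.iUnion_subset fun i x hx => hx.1
      · rw [hΔ]; exact convex_convexHull ℝ _
  · -- part 4
    have himg : (fun x => fun i => pairR x (e i)) '' (convexHull ℝ (V : Set (Fin n → ℝ))) =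
        convexHull ℝ ((fun x => fun i => pairR x (e i)) '' (V : Set (Fin n → ℝ))) :=
      LinearMap.image_convexHull
        { toFun := fun x i => pairR x (e i)
          map_add' := fun x y => funext fun i => pairR_add_left x y (e i)
          map_smul' := fun c x => funext fun i => pairR_smul_left c x (e i) } _
    rw [hΔ, himg]
    congr 1
    apply subset_antisymm
    · rintro _ ⟨v, hv, rfl⟩
      obtain ⟨i, h1, h2⟩ := hpart v hv
      have hv' : (fun j => pairR v (e j)) = (Pi.single i 1 : Fin r → ℝ) := by
        funext j
        rcases eq_or_ne j i with rfl | hj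
        · simpa using h1
        · simpa [Pi.single_eq_of_ne hj] using h2 j hj
      exact ⟨i, hv'.symm⟩
    · rintro _ ⟨i, rfl⟩
      obtain ⟨v, hv, h1, h2⟩ := hVi i
      have hv' : (fun j => pairR v (e j)) = (Pi.single i 1 : Fin r → ℝ) := by
        funext j
        rcases eq_or_ne j i with rfl | hj
        · simpa using h1
        · simpa [Pi.single_eq_of_ne hj] using h2 j hj
      exact ⟨v, hv, hv'⟩
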